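/- Consistency of the finite anchored inverse maps: if D_{k'} ⊆ D_k ⊆ W with W finite and simply connected, t a spanning tree of G*_{W,k}, and W' = desc_t(D_{k'}), then the restriction of the sandpile ψ_{W,k}(t) to W' equals ψ_{W',k'}(t_{W',k'}), where t_{W',k'} is the restriction of t to the edges of G*_{W',k'}. -/

import Mathlib

open Finset
open scoped Classical

namespace Anchored

variable {V : Type*} [DecidableEq V]

/-- iterating a partial parent map; `none` represents the sink. -/
def iterP (p : V → Option V) : ℕ → V → Option V
  | 0, v => some v
  | n + 1, v => (p v).bind (iterP p n)

/-- walks in the multigraph `a` avoiding the set `A` -/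
def ReachAvoid (a : V → V → ℕ) (A : Finset V) (u v : V) : Prop :=
  ∃ (nn : ℕ) (f : ℕ → V), f 0 = u ∧ f nn = v ∧ (∀ j ≤ nn, f j ∉ A) ∧
    ∀ j < nn, 0 < a (f j) (f (j + 1))

/-- oriented edges (with multiplicity index) from `v` into the finite set `T` -/
def edgesTo (a : V → V → ℕ) (v : V) (T : Finset V) : Finset (V × ℕ) :=
  T.biUnion fun w => (Finset.range (a v w)).image fun i => (w, i)

variable (a : V → V → ℕ) (S : Finset V) (out : V → Finset V)

/-- number of edges from `v` to the sink of the wired graph on `S`;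
`out v` is the set of heads of sink edges at `v` (actual vertices of `G`). -/
def sk (v : V) : ℕ := ∑ w ∈ out v, a v w

/-- degree of `v` in the wired graph on `S` -/
def degS (v : V) : ℕ := sk a out v + ∑ w ∈ S, a v w

variable (η : V → ℕ) (D : ℕ → Finset V) (kk : ℕ)

/-- number of global steps allotted to each phase of the anchored burning -/
def plen : ℕ := S.card + 1

/-- Flattened anchored burning process: `U m` is the set of unburnt vertices
after `m` global steps; phase `i` (for `i = 1, …, kk + 1`) occupies the steps
`m ∈ [(i-1)·plen, i·plen)` and forbids burning the vertices of `D (kk - i + 1)`.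
A vertex burns when its height is at least its number of edges to unburnt
vertices (the sink being burnt at time `0`). -/
def U : ℕ → Finset V
  | 0 => S
  | m + 1 => (U m).filter fun v =>
      v ∈ D (kk - m / plen S) ∨ η v < ∑ w ∈ U m, a v w

/-- the (anchored) burning time of `v` -/
noncomputable def τ (v : V) : ℕ := sInf {m | v ∉ U a S η D kk m}

/-- number of oriented edges from `v` whose head was burnt strictly before `v`
(including the sink edges) -/
noncomputable def mv (v : V) : ℕ :=
  sk a out v + ∑ w ∈ S \ U a S η D kk (τ a S η D kk v - 1), a v w

/-- the set of candidate tree edges at `v`: the oriented edges from `v` to the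
layer burnt at the previous step (at the first step of a phase: to everything
burnt in earlier phases, including the sink) -/
noncomputable def Fv (v : V) : Finset (V × ℕ) :=
  if (τ a S η D kk v - 1) % plen S = 0 then
    edgesTo a v (out v) ∪ edgesTo a v (S \ U a S η D kk (τ a S η D kk v - 1))
  else
    edgesTo a v
      (U a S η D kk (τ a S η D kk v - 2) \ U a S η D kk (τ a S η D kk v - 1))

/-- `Spec … prec e` says that `e` encodes the spanning tree assigned to `η` by
the anchored burning bijection: each `v ∈ S` gets the edge of `F_v` having
exactly `ℓ` predecessors in the ordering `prec v`, where
`η v = deg v - m_v + ℓ`. -/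
def Spec (prec : V → (V × ℕ) → (V × ℕ) → Prop) (e : V → Option (V × ℕ)) : Prop :=
  (∀ v ∉ S, e v = none) ∧
  ∀ v ∈ S, ∃ ed : V × ℕ, e v = some ed ∧ ed ∈ Fv a S out η D kk v ∧
    η v + mv a S out η D kk v =
      degS a S out v + ((Fv a S out η D kk v).filter fun f => prec v f ed).card

/-- the parent map (toward the sink) of an encoded spanning tree -/
def par (e : V → Option (V × ℕ)) (v : V) : Option V :=
  (e v).bind fun p => if p.1 ∈ S then some p.1 else none

/-- spanning trees of the wired graph on `S`, oriented toward the sink: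
every vertex of `S` carries exactly one valid oriented edge, and following
these edges one reaches the sink. -/
def IsSpanningTree (e : V → Option (V × ℕ)) : Prop :=
  (∀ v ∉ S, e v = none) ∧
  (∀ v ∈ S, ∃ w i, e v = some (w, i) ∧ i < a v w ∧ (w ∈ S ∨ w ∈ out v)) ∧
  (∀ v ∈ S, ∃ m, iterP (par S e) m v = none)

/-- stable configurations on the wired graph on `S` -/
def Stable : Prop := ∀ v ∈ S, η v < degS a S out v

/-- ample for every nonempty subset of `S` -/
def Ample : Prop := ∀ F ⊆ S, F.Nonempty → ∃ x ∈ F, ∑ y ∈ F, a x y ≤ η x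

/-- recurrent configurations on the wired graph on `S` -/
def Recurrent : Prop := Stable a S out η ∧ Ample a S η

end Anchored

namespace Anchored

section AuxLemmas

variable {V : Type*} [DecidableEq V]
variable (a : V → V → ℕ) (S : Finset V) (η : V → ℕ) (D : ℕ → Finset V) (kk : ℕ)

lemma mem_edgesTo {v w : V} {i : ℕ} {T : Finset V} :
    (w, i) ∈ edgesTo a v T ↔ w ∈ T ∧ i < a v w := by
  simp only [edgesTo, mem_biUnion, mem_image, mem_range]
  constructor
  · rintro ⟨x, hx, j, hj, h⟩
    cases h
    exact ⟨hx, hj⟩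
  · rintro ⟨hw, hi⟩
    exact ⟨w, hw, i, hi, rfl⟩

lemma U_succ (m : ℕ) :
    U a S η D kk (m + 1) = (U a S η D kk m).filter fun v =>
      v ∈ D (kk - m / plen S) ∨ η v < ∑ w ∈ U a S η D kk m, a v w := rfl

lemma U_subset : ∀ m, U a S η D kk m ⊆ S
  | 0 => le_refl S
  | (m + 1) => (filter_subset _ _).trans (U_subset m)

lemma U_succ_subset (m : ℕ) : U a S η D kk (m + 1) ⊆ U a S η D kk m :=
  filter_subset _ _

lemma U_antitone {m n : ℕ} (h : m ≤ n) : U a S η D kk n ⊆ U a S η D kk m := by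
  induction n with
  | zero => simpa [Nat.le_zero.mp h] using subset_rfl
  | succ n ih =>
    rcases Nat.eq_or_lt_of_le h with rfl | h'
    · exact subset_rfl
    · exact (U_succ_subset a S η D kk n).trans (ih (Nat.lt_succ_iff.mp h'))

lemma mem_U_succ {m : ℕ} {v : V} :
    v ∈ U a S η D kk (m + 1) ↔ v ∈ U a S η D kk m ∧
      (v ∈ D (kk - m / plen S) ∨ η v < ∑ w ∈ U a S η D kk m, a v w) := by
  rw [U_succ]; exact mem_filter

/-- constancy of `U` after a repetition, while the phase (quotient) is unchanged -/
lemma U_const {m : ℕ} (h1 : U a S η D kk (m + 1) = U a S η D kk m) :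
    ∀ n, m ≤ n → (∀ s, m ≤ s → s < n → s / plen S = m / plen S) →
      U a S η D kk n = U a S η D kk m := by
  intro n
  induction n with
  | zero => intro h _; simpa [Nat.le_zero.mp h]
  | succ n ih =>
    intro hmn hq
    rcases Nat.eq_or_lt_of_le hmn with h' | h'
    · rw [← h']
    · have hmn' : m ≤ n := Nat.lt_succ_iff.mp h'
      have hn : U a S η D kk n = U a S η D kk m :=
        ih hmn' fun s hs hs' => hq s hs (hs'.trans (Nat.lt_succ_self n))
      have hqn : n / plen S = m / plen S := hq n hmn' (Nat.lt_succ_self n)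
      calc U a S η D kk (n + 1)
          = (U a S η D kk n).filter fun v =>
              v ∈ D (kk - n / plen S) ∨ η v < ∑ w ∈ U a S η D kk n, a v w := rfl
        _ = U a S η D kk (m + 1) := by rw [hn, hqn]; rfl
        _ = U a S η D kk m := h1

lemma chain_card {M : ℕ} :
    ∀ r, (∀ s < r, U a S η D kk (M + s + 1) ⊂ U a S η D kk (M + s)) →
      (U a S η D kk (M + r)).card + r ≤ (U a S η D kk M).card := by
  intro r
  induction r with
  | zero => intro _; simp
  | succ r ih =>
    intro h
    have hr := h r (Nat.lt_succ_self r)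
    have h1 : (U a S η D kk (M + r + 1)).card < (U a S η D kk (M + r)).card :=
      card_lt_card hr
    have h2 := ih fun s hs => h s (hs.trans (Nat.lt_succ_self r))
    have : M + (r + 1) = M + r + 1 := by omega
    rw [this]
    omega

lemma exists_stab (M : ℕ) :
    ∃ r, r ≤ (U a S η D kk M).card ∧
      U a S η D kk (M + r + 1) = U a S η D kk (M + r) := by
  by_contra hcon
  push_neg at hcon
  have hstrict : ∀ s < (U a S η D kk M).card + 1,
      U a S η D kk (M + s + 1) ⊂ U a S η D kk (M + s) := by
    intro s hs
    refine lt_of_le_of_ne (U_succ_subset a S η D kk (M + s)) ?_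
    exact hcon s (by omega)
  have := chain_card a S η D kk ((U a S η D kk M).card + 1) hstrict
  omega

lemma div_plen {j r : ℕ} (hr : r < plen S) : (j * plen S + r) / plen S = j := by
  have hp : 0 < plen S := Nat.succ_pos _
  rw [Nat.mul_comm, Nat.mul_add_div hp, Nat.div_eq_of_lt hr]
  omega

lemma mod_plen {j r : ℕ} (hr : r < plen S) : (j * plen S + r) % plen S = r := by
  rw [Nat.mul_comm, Nat.mul_add_mod, Nat.mod_eq_of_lt hr]

/-- the set at a phase boundary is a fixed point of the preceding phase's filter -/
lemma boundary_fix (j : ℕ) {v : V} (hv : v ∈ U a S η D kk ((j + 1) * plen S)) :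
    v ∈ D (kk - j) ∨ η v < ∑ w ∈ U a S η D kk ((j + 1) * plen S), a v w := by
  set p := plen S with hp
  have hmul : (j + 1) * p = j * p + p := by ring
  obtain ⟨r, hr, hstab⟩ := exists_stab a S η D kk (j * p)
  have hrp : r < p := by
    have h1 : (U a S η D kk (j * p)).card ≤ S.card :=
      card_le_card (U_subset a S η D kk _)
    have : p = S.card + 1 := rfl
    omega
  have hquot : ∀ s, j * p + r ≤ s → s < (j + 1) * p → s / p = (j * p + r) / p := by
    intro s hs hs'
    have h1 : s / p = j := by
      have hd : s = j * p + (s - j * p) := by omega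
      rw [hd]
      exact div_plen S (by omega)
    rw [h1, div_plen S hrp]
  have hconst : U a S η D kk ((j + 1) * p) = U a S η D kk (j * p + r) :=
    U_const a S η D kk hstab _ (by omega) (fun s hs hs' => hquot s hs hs')
  have hv' : v ∈ U a S η D kk (j * p + r + 1) := by rw [hstab, ← hconst]; exact hv
  have hmem := (mem_U_succ a S η D kk).mp hv'
  have hq : (j * p + r) / p = j := div_plen S hrp
  rw [hq] at hmem
  rcases hmem.2 with h | h
  · exact Or.inl h
  · right
    rw [hconst]
    exact h

/-- everything burns by the end of phase `kk+1`, assuming ampleness -/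
lemma U_empty (hD0 : D 0 = ∅) (hample : Ample a S η) :
    U a S η D kk ((kk + 1) * plen S) = ∅ := by
  by_contra hne
  have hne' : (U a S η D kk ((kk + 1) * plen S)).Nonempty :=
    nonempty_iff_ne_empty.mpr hne
  obtain ⟨x, hx, hxs⟩ := hample _ (U_subset a S η D kk _) hne'
  have := boundary_fix a S η D kk kk hx
  rcases this with h | h
  · rw [Nat.sub_self, hD0] at h; exact absurd h (notMem_empty x)
  · omega

variable {a S η D kk} in
lemma tau_witness {v : V} (hw : ∃ m, v ∉ U a S η D kk m) :
    v ∉ U a S η D kk (τ a S η D kk v) :=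
  Nat.sInf_mem hw

variable {a S η D kk} in
lemma mem_U_iff_lt_tau {v : V} (hw : ∃ m, v ∉ U a S η D kk m) {m : ℕ} :
    v ∈ U a S η D kk m ↔ m < τ a S η D kk v := by
  constructor
  · intro hv
    by_contra h
    push_neg at h
    exact absurd (U_antitone a S η D kk h hv) (tau_witness hw)
  · intro h
    by_contra hv
    have hle : τ a S η D kk v ≤ m := Nat.sInf_le hv
    omega

variable (out : V → Finset V)

lemma degS_split (v : V) :
    degS a S out v = mv a S out η D kk v +
      ∑ w ∈ U a S η D kk (τ a S η D kk v - 1), a v w := by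
  have h : ∑ w ∈ S \ U a S η D kk (τ a S η D kk v - 1), a v w
      + ∑ w ∈ U a S η D kk (τ a S η D kk v - 1), a v w = ∑ w ∈ S, a v w :=
    Finset.sum_sdiff (U_subset a S η D kk (τ a S η D kk v - 1))
  unfold degS mv
  omega

end AuxLemmas

end Anchored

open Anchored

/-- Consistency of the finite anchored inverse maps: if
`D k' ⊆ D k ⊆ W` with `W` finite and simply connected, `t` is a spanning tree
of `G*_{W,k}` with `η = ψ_{W,k} t` (i.e. `φ` maps `η` to `t` on `G*_{W,k}`),
and `W' = desc_t (D k')`, then the restriction of `η` to `W'` corresponds to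
the restriction `t_{W',k'}` of `t` to the edges of `G*_{W',k'}` under the
anchored bijection of `G*_{W',k'}`. -/
theorem stmt9 {V : Type*} [DecidableEq V] [Infinite V]
    (a : V → V → ℕ) (nbrs : V → Finset V)
    (hsymm : ∀ u v, a u v = a v u) (hloop : ∀ v, a v v = 0)
    (hnbrs : ∀ v w, w ∈ nbrs v ↔ 0 < a v w)
    (hlf : ∀ v, {w | 0 < a v w}.Finite)
    (hconn : ∀ u v : V, Anchored.ReachAvoid a ∅ u v)
    (D : ℕ → Finset V) (hmono : Monotone D) (hD0 : D 0 = ∅)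
    (hcover : ∀ v, ∃ j, v ∈ D j)
    (hsc : ∀ j, 1 ≤ j → ∀ v ∉ D j, {w | Anchored.ReachAvoid a (D j) v w}.Infinite)
    (prec : V → (V × ℕ) → (V × ℕ) → Prop)
    (hprec : ∀ v, IsStrictTotalOrder (V × ℕ) (prec v))
    (kk kk' : ℕ) (hkk'1 : 1 ≤ kk') (hkk : kk' ≤ kk)
    (W : Finset V) (hDW : D kk ⊆ W)
    (hWsc : ∀ v ∉ W, {w | Anchored.ReachAvoid a W v w}.Infinite)
    (outW : V → Finset V)
    (houtW : ∀ v, outW v = if v ∈ D kk then nbrs v \ W else ∅)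
    (η : V → ℕ) (t : V → Option (V × ℕ))
    (hrec : Anchored.Recurrent a W outW η)
    (ht : Anchored.IsSpanningTree a W outW t)
    (hspec : Anchored.Spec a W outW η D kk prec t)
    (W' : Finset V)
    (hW' : ∀ x, x ∈ W' ↔ ∃ (m : ℕ) (u : V),
      Anchored.iterP (Anchored.par W t) m x = some u ∧ u ∈ D kk')
    (outW' : V → Finset V)
    (houtW' : ∀ v, outW' v = if v ∈ D kk' then nbrs v \ W' else ∅) :
    Anchored.Spec a W' outW' η D kk' prec
      (fun v => if v ∈ W' then t v else none) := by
  classical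
  obtain ⟨hstable, hample⟩ := hrec
  obtain ⟨hspec1, hspec2⟩ := hspec
  have hppos : 0 < plen W := Nat.succ_pos _
  have hp'pos : 0 < plen W' := Nat.succ_pos _
  set c := kk - kk' with hc
  have hckk : kk = c + kk' := by omega
  have hUempty : U a W η D kk ((kk + 1) * plen W) = ∅ :=
    U_empty a W η D kk hD0 hample
  have htw : ∀ v : V, ∃ m, v ∉ U a W η D kk m := by
    intro v; exact ⟨(kk + 1) * plen W, by rw [hUempty]; exact notMem_empty v⟩
  have memU : ∀ {m : ℕ} {v : V}, v ∈ U a W η D kk m ↔ m < τ a W η D kk v :=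
    fun {m v} => mem_U_iff_lt_tau (htw v)
  have hW'W : W' ⊆ W := by
    intro x hx
    obtain ⟨m, u, hit, hu⟩ := (hW' x).mp hx
    by_contra hxW
    have htx : t x = none := hspec1 x hxW
    cases m with
    | zero =>
      simp only [iterP, Option.some.injEq] at hit
      exact hxW (hDW (hmono hkk (hit ▸ hu)))
    | succ m =>
      simp only [iterP, par, htx, Option.bind] at hit
      exact nomatch hit
  have hDkk'W' : D kk' ⊆ W' := fun d hd => (hW' d).mpr ⟨0, d, rfl, hd⟩
  have hclose : ∀ v w i, t v = some (w, i) → w ∈ W → w ∈ W' → v ∈ W' := by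
    intro v w i htv hwW hwW'
    obtain ⟨m, u, hit, hu⟩ := (hW' w).mp hwW'
    refine (hW' v).mpr ⟨m + 1, u, ?_, hu⟩
    have hpar : par W t v = some w := by
      simp [par, htv, hwW]
    simp only [iterP, hpar, Option.bind]
    exact hit
  have htedge : ∀ v ∈ W, ∀ w i, t v = some (w, i) → w ∈ W →
      τ a W η D kk w < τ a W η D kk v := by
    intro v hv w i htv hwW
    obtain ⟨ed, hed, hedF, _⟩ := hspec2 v hv
    rw [htv] at hed
    cases hed
    have htaupos : 0 < τ a W η D kk v := by
      have : v ∈ U a W η D kk 0 := hv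
      exact memU.mp this
    have hwnot : w ∉ U a W η D kk (τ a W η D kk v - 1) := by
      rw [Fv] at hedF
      split_ifs at hedF with hifc
      · rcases mem_union.mp hedF with h | h
        · exfalso
          have := (mem_edgesTo a).mp h
          rw [houtW v] at this
          split_ifs at this with hvd
          · exact (mem_sdiff.mp this.1).2 hwW
          · exact notMem_empty w this.1
        · exact (mem_sdiff.mp ((mem_edgesTo a).mp h).1).2
      · exact (mem_sdiff.mp ((mem_edgesTo a).mp hedF).1).2
    have := memU.not.mp hwnot
    omega
  have hprot : ∀ n, n ≤ (c + 1) * plen W → ∀ d ∈ D kk', d ∈ U a W η D kk n := by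
    intro n
    induction n with
    | zero => intro _ d hd; exact hDW (hmono hkk hd)
    | succ n ih =>
      intro hn d hd
      refine (mem_U_succ a W η D kk).mpr ⟨ih (by omega) d hd, Or.inl ?_⟩
      have hdiv : n / plen W ≤ c := by
        have h1 : n < (c + 1) * plen W := by omega
        have := (Nat.div_lt_iff_lt_mul hppos).mpr h1
        omega
      exact hmono (by omega) hd
  have htauW' : ∀ x ∈ W', (c + 1) * plen W < τ a W η D kk x := by
    have hchain : ∀ m (x u : V), iterP (par W t) m x = some u → u ∈ D kk' →
        (c + 1) * plen W < τ a W η D kk x := by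
      intro m
      induction m with
      | zero =>
        intro x u hit hu
        simp only [iterP, Option.some.injEq] at hit
        have : x ∈ U a W η D kk ((c + 1) * plen W) :=
          hprot _ le_rfl x (hit ▸ hu)
        exact memU.mp this
      | succ m ih =>
        intro x u hit hu
        have hxW : x ∈ W := by
          by_contra hxW
          simp only [iterP, par, hspec1 x hxW, Option.bind] at hit
          exact nomatch hit
        simp only [iterP] at hit
        cases hpx : par W t x with
        | none => rw [hpx] at hit; simp at hit
        | some w =>
          rw [hpx] at hit
          simp only [Option.bind] at hit
          have hw := ih w u hit hu
          obtain ⟨pr, htx, hif⟩ : ∃ pr, t x = some pr ∧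
              (if pr.1 ∈ W then some pr.1 else none) = some w := by
            rcases htx : t x with _ | pr
            · simp [par, htx] at hpx
            · exact ⟨pr, rfl, by simpa [par, htx] using hpx⟩
          rcases Decidable.em (pr.1 ∈ W) with hprW | hprW
          · rw [if_pos hprW] at hif
            cases hif
            have := htedge x hxW pr.1 pr.2 (by rw [htx]) hprW
            omega
          · rw [if_neg hprW] at hif
            exact nomatch hif
    intro x hx
    obtain ⟨m, u, hit, hu⟩ := (hW' x).mp hx
    exact hchain m x u hit hu
  have hXsub : ∀ T (v : V), v ∈ U a W η D kk ((c + 1) * plen W) →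
      τ a W η D kk v = T → v ∈ W' := by
    intro T
    induction T using Nat.strong_induction_on with
    | _ T ih =>
      intro v hvX htv
      have hvW : v ∈ W := U_subset a W η D kk _ hvX
      have hT1 : (c + 1) * plen W < T := htv ▸ memU.mp hvX
      obtain ⟨j, s, hs, hdec⟩ : ∃ j s, s < plen W ∧ T - 1 = (c + j) * plen W + s := by
        refine ⟨(T - 1) / plen W - c, (T - 1) % plen W, Nat.mod_lt _ hppos, ?_⟩
        have h1 := Nat.div_add_mod' (T - 1) (plen W)
        have h2 : c + 1 ≤ (T - 1) / plen W := by
          rw [Nat.le_div_iff_mul_le hppos]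
          omega
        have h3 : (c + ((T - 1) / plen W - c)) * plen W =
            ((T - 1) / plen W) * plen W := by
          congr 1; omega
        rw [h3]
        omega
      have hj1 : 1 ≤ j := by
        have h2 : (c + 1) * plen W = c * plen W + plen W := by ring
        have h3 : (c + j) * plen W = c * plen W + j * plen W := by ring
        by_contra hcon
        push_neg at hcon
        interval_cases j
        omega
      have hvT1 : v ∈ U a W η D kk (T - 1) := memU.mpr (by omega)
      have hvT : v ∉ U a W η D kk T := fun h => by have := memU.mp h; omega
      rcases Nat.eq_zero_or_pos s with hs0 | hs1
      · subst hs0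
        have hTm : T - 1 = (c + j) * plen W := by omega
        have hTeq : T = (c + j) * plen W + 1 := by omega
        have hbd : v ∈ D (kk - (c + j - 1)) ∨
            η v < ∑ w ∈ U a W η D kk ((c + j - 1 + 1) * plen W), a v w := by
          apply boundary_fix
          have h4 : c + j - 1 + 1 = c + j := by omega
          rw [h4, ← hTm]
          exact hvT1
        have hnot : ¬ (v ∈ D (kk - ((c + j) * plen W) / plen W) ∨
            η v < ∑ w ∈ U a W η D kk ((c + j) * plen W), a v w) := by
          intro hcon
          apply hvT
          rw [hTeq]
          exact (mem_U_succ a W η D kk).mpr ⟨hTm ▸ hvT1, hcon⟩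
        push_neg at hnot
        have hdd : ((c + j) * plen W) / plen W = c + j := by
          have := div_plen W (j := c + j) (r := 0) hppos
          simpa using this
        rcases hbd with h | h
        · refine hDkk'W' (hmono ?_ h)
          omega
        · exfalso
          have h4 : c + j - 1 + 1 = c + j := by omega
          rw [h4, ← hTm] at h
          rw [← hTm] at hnot
          omega
      · obtain ⟨ed, hed, hedF, _⟩ := hspec2 v hvW
        have hmodT : (T - 1) % plen W = s := by
          rw [hdec, mod_plen W hs]
        have hτv : τ a W η D kk v = T := htv
        rw [Fv, hτv] at hedF
        rw [if_neg (by omega)] at hedF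
        obtain ⟨w, i⟩ := ed
        have hwmem := (mem_edgesTo a).mp hedF
        have hw2 : w ∈ U a W η D kk (T - 2) := (mem_sdiff.mp hwmem.1).1
        have hw1 : w ∉ U a W η D kk (T - 1) := (mem_sdiff.mp hwmem.1).2
        have hτw2 : T - 2 < τ a W η D kk w := memU.mp hw2
        have hτw1 : ¬ (T - 1 < τ a W η D kk w) := memU.not.mp hw1
        have hwX : w ∈ U a W η D kk ((c + 1) * plen W) := by
          refine U_antitone a W η D kk ?_ hw2
          have h3 : (c + j) * plen W = c * plen W + j * plen W := by ring
          have h2 : (c + 1) * plen W = c * plen W + plen W := by ring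
          have h4 : plen W ≤ j * plen W := Nat.le_mul_of_pos_left _ hj1
          omega
        have hwW' : w ∈ W' := ih (τ a W η D kk w) (by omega) w hwX rfl
        exact hclose v w i hed (U_subset a W η D kk _ hw2) hwW'
  have hXeq : U a W η D kk ((c + 1) * plen W) = W' := by
    apply Finset.Subset.antisymm
    · intro v hv; exact hXsub _ v hv rfl
    · intro v hv; exact memU.mpr (htauW' v hv)
  have hW'subU : ∀ n, n ≤ (c + 1) * plen W → W' ⊆ U a W η D kk n := by
    intro n hn
    rw [← hXeq]
    exact U_antitone a W η D kk hn
  have hp'lep : plen W' ≤ plen W := by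
    have := card_le_card hW'W
    simp only [plen]
    omega
  have hphase1 : ∀ m', m' ≤ plen W' → U a W' η D kk' m' = W' := by
    intro m'
    induction m' with
    | zero => intro _; rfl
    | succ m' ih =>
      intro hm'
      rw [U_succ, ih (by omega), Finset.filter_eq_self.mpr]
      intro v hv
      have hd0 : m' / plen W' = 0 := Nat.div_eq_of_lt (by omega)
      rw [hd0, Nat.sub_zero]
      have hbd := boundary_fix a W η D kk c (v := v) (by rw [hXeq]; exact hv)
      have hkc : kk - c = kk' := by omega
      rw [hkc, hXeq] at hbd
      exact hbd
  have halign : ∀ m', U a W' η D kk' m' =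
      U a W η D kk ((c + m' / plen W') * plen W + m' % plen W') ∩ W' := by
    intro m'
    induction m' with
    | zero =>
      simp only [Nat.zero_div, Nat.zero_mod, Nat.add_zero]
      rw [show (U a W' η D kk' 0) = W' from rfl]
      have hle : c * plen W ≤ (c + 1) * plen W := by
        have h0 : c * plen W + plen W = (c + 1) * plen W := by ring
        omega
      rw [Finset.inter_eq_right.mpr (hW'subU _ hle)]
    | succ m' ih =>
      obtain ⟨i1, r, hr, hm'⟩ : ∃ i1 r, r < plen W' ∧ m' = i1 * plen W' + r :=
        ⟨m' / plen W', m' % plen W', Nat.mod_lt _ hp'pos,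
          by have := Nat.div_add_mod' m' (plen W'); omega⟩
      have hdivm' : m' / plen W' = i1 := by rw [hm']; exact div_plen W' hr
      have hmodm' : m' % plen W' = r := by rw [hm', mod_plen W' hr]
      have hA : (c + 1) * plen W = c * plen W + plen W := by ring
      rcases Nat.eq_zero_or_pos i1 with hi0 | hi1
      · subst hi0
        have hm'lt : m' < plen W' := by omega
        have hL : U a W' η D kk' (m' + 1) = W' := hphase1 _ (by omega)
        rcases Nat.lt_or_ge (m' + 1) (plen W') with hlt | hge
        · have hd : (m' + 1) / plen W' = 0 := Nat.div_eq_of_lt hlt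
          have hm : (m' + 1) % plen W' = m' + 1 := Nat.mod_eq_of_lt hlt
          rw [hL, hd, hm]
          have hle : (c + 0) * plen W + (m' + 1) ≤ (c + 1) * plen W := by
            have h0 : (c + 0) * plen W = c * plen W := by ring
            omega
          rw [Finset.inter_eq_right.mpr (hW'subU _ hle)]
        · have heq : m' + 1 = plen W' := by omega
          rw [hL, heq, Nat.div_self hp'pos, Nat.mod_self, Nat.add_zero]
          rw [hXeq, Finset.inter_self]
      · have hB : (c + i1) * plen W = c * plen W + i1 * plen W := by ring
        have hpi1 : plen W ≤ i1 * plen W := Nat.le_mul_of_pos_left _ hi1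
        have hgm : (c + 1) * plen W ≤ (c + i1) * plen W + r := by omega
        have hUsub : U a W η D kk ((c + i1) * plen W + r) ⊆ W' := by
          rw [← hXeq]; exact U_antitone a W η D kk hgm
        have hIH' : U a W' η D kk' m' =
            U a W η D kk ((c + i1) * plen W + r) := by
          rw [ih, hdivm', hmodm', Finset.inter_eq_left.mpr hUsub]
        have hdivW : ((c + i1) * plen W + r) / plen W = c + i1 :=
          div_plen W (by omega)
        have hstep : U a W' η D kk' (m' + 1) =
            U a W η D kk ((c + i1) * plen W + r + 1) := by
          rw [U_succ, U_succ, hIH', hdivm', hdivW,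
            show kk' - i1 = kk - (c + i1) from by omega]
        rcases Nat.lt_or_ge (r + 1) (plen W') with hlt | hge
        · have hd : (m' + 1) / plen W' = i1 := by
            rw [show m' + 1 = i1 * plen W' + (r + 1) from by omega]
            exact div_plen W' hlt
          have hm : (m' + 1) % plen W' = r + 1 := by
            rw [show m' + 1 = i1 * plen W' + (r + 1) from by omega,
              mod_plen W' hlt]
          rw [hstep, hd, hm]
          have hsub : U a W η D kk ((c + i1) * plen W + (r + 1)) ⊆ W' := by
            rw [← hXeq]; exact U_antitone a W η D kk (by omega)
          rw [show (c + i1) * plen W + r + 1 = (c + i1) * plen W + (r + 1)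
            from by omega, Finset.inter_eq_left.mpr hsub]
        · have hr1 : r + 1 = plen W' := by omega
          have hm'eq : m' + 1 = (i1 + 1) * plen W' := by
            rw [hm', Nat.add_assoc, hr1]; ring
          have hd : (m' + 1) / plen W' = i1 + 1 := by
            rw [hm'eq]
            simpa using div_plen W' (j := i1 + 1) (r := 0) hp'pos
          have hm0 : (m' + 1) % plen W' = 0 := by
            rw [hm'eq]
            simpa using mod_plen W' (j := i1 + 1) (r := 0) hp'pos
          have htail : U a W η D kk ((c + i1) * plen W + plen W') =
              U a W η D kk ((c + i1) * plen W + plen W) := by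
            obtain ⟨r0, hr0, hstab⟩ := exists_stab a W η D kk ((c + i1) * plen W)
            have hMX : U a W η D kk ((c + i1) * plen W) ⊆ W' := by
              rw [← hXeq]; exact U_antitone a W η D kk (by omega)
            have hr0p' : r0 < plen W' := by
              have h1 := card_le_card hMX
              have h2 : plen W' = W'.card + 1 := rfl
              omega
            have hquot : ∀ s2, (c + i1) * plen W + r0 ≤ s2 →
                s2 < (c + i1) * plen W + plen W →
                s2 / plen W = ((c + i1) * plen W + r0) / plen W := by
              intro s2 h1 h2
              rw [div_plen W (by omega),
                show s2 = (c + i1) * plen W + (s2 - (c + i1) * plen W) from by omega,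
                div_plen W (by omega)]
            have h1 := U_const a W η D kk hstab ((c + i1) * plen W + plen W')
              (by omega) (fun s2 hs2 hs2' => hquot s2 hs2 (by omega))
            have h2 := U_const a W η D kk hstab ((c + i1) * plen W + plen W)
              (by omega) (fun s2 hs2 hs2' => hquot s2 hs2 hs2')
            rw [h1, h2]
          have hCeq : (c + (i1 + 1)) * plen W + 0 =
              (c + i1) * plen W + plen W := by ring
          rw [hstep, hd, hm0, hCeq,
            show (c + i1) * plen W + r + 1 = (c + i1) * plen W + plen W'
              from by omega, htail]
          have hsub : U a W η D kk ((c + i1) * plen W + plen W) ⊆ W' := by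
            rw [← hXeq]; exact U_antitone a W η D kk (by omega)
          rw [Finset.inter_eq_left.mpr hsub]
  constructor
  · intro v hv
    simp only [if_neg hv]
  · intro v hvW'
    have hvW : v ∈ W := hW'W hvW'
    obtain ⟨ed, hed, hedF, heqn⟩ := hspec2 v hvW
    obtain ⟨T, hTdef⟩ : ∃ T, τ a W η D kk v = T := ⟨_, rfl⟩
    have hT1 : (c + 1) * plen W < T := hTdef ▸ htauW' v hvW'
    obtain ⟨j, s, hs, hdec⟩ : ∃ j s, s < plen W ∧
        T - 1 = (c + j) * plen W + s := by
      refine ⟨(T - 1) / plen W - c, (T - 1) % plen W, Nat.mod_lt _ hppos, ?_⟩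
      have h1 := Nat.div_add_mod' (T - 1) (plen W)
      have h2 : c + 1 ≤ (T - 1) / plen W := by
        rw [Nat.le_div_iff_mul_le hppos]; omega
      have h3 : (c + ((T - 1) / plen W - c)) * plen W =
          ((T - 1) / plen W) * plen W := by
        congr 1; omega
      rw [h3]
      omega
    have hA : (c + 1) * plen W = c * plen W + plen W := by ring
    have hB : (c + j) * plen W = c * plen W + j * plen W := by ring
    have hj1 : 1 ≤ j := by
      by_contra hcon
      push_neg at hcon
      interval_cases j
      omega
    have hpj : plen W ≤ j * plen W := Nat.le_mul_of_pos_left _ hj1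
    have hvT1 : v ∈ U a W η D kk (T - 1) := memU.mpr (by omega)
    have hvT : v ∉ U a W η D kk T := fun h => by
      have := memU.mp h; omega
    have hstrict : ∀ r2, r2 < s + 1 →
        U a W η D kk ((c + j) * plen W + r2 + 1) ⊂
          U a W η D kk ((c + j) * plen W + r2) := by
      intro r2 hr2
      refine lt_of_le_of_ne (U_succ_subset a W η D kk _) ?_
      intro heqq
      have hquot : ∀ s2, (c + j) * plen W + r2 ≤ s2 →
          s2 < (c + j) * plen W + s + 1 →
          s2 / plen W = ((c + j) * plen W + r2) / plen W := by
        intro s2 h1 h2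
        rw [div_plen W (by omega),
          show s2 = (c + j) * plen W + (s2 - (c + j) * plen W) from by omega,
          div_plen W (by omega)]
      have hcst := U_const a W η D kk heqq ((c + j) * plen W + s + 1)
        (by omega) hquot
      apply hvT
      have hvin : v ∈ U a W η D kk ((c + j) * plen W + r2) :=
        U_antitone a W η D kk (by omega) (hdec ▸ hvT1)
      rw [show T = (c + j) * plen W + s + 1 from by omega, hcst]
      exact hvin
    have hcard := chain_card a W η D kk (M := (c + j) * plen W) (s + 1) hstrict
    have hMX : U a W η D kk ((c + j) * plen W) ⊆ W' := by
      rw [← hXeq]; exact U_antitone a W η D kk (by omega)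
    have hsp' : s + 1 < plen W' := by
      have h1 := card_le_card hMX
      have h2 : plen W' = W'.card + 1 := rfl
      omega
    obtain ⟨T', hT'def⟩ : ∃ x, x = j * plen W' + s + 1 := ⟨_, rfl⟩
    have hUsubT1 : U a W η D kk (T - 1) ⊆ W' := by
      rw [← hXeq]; exact U_antitone a W η D kk (by omega)
    have hU'T'1 : U a W' η D kk' (T' - 1) = U a W η D kk (T - 1) := by
      rw [hT'def, show j * plen W' + s + 1 - 1 = j * plen W' + s from by omega,
        halign, div_plen W' (show s < plen W' from by omega),
        mod_plen W' (show s < plen W' from by omega),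
        show (c + j) * plen W + s = T - 1 from by omega,
        Finset.inter_eq_left.mpr hUsubT1]
    have hU'T' : U a W' η D kk' T' = U a W η D kk T := by
      rw [hT'def, show j * plen W' + s + 1 = j * plen W' + (s + 1) from by omega,
        halign, div_plen W' hsp', mod_plen W' hsp',
        show (c + j) * plen W + (s + 1) = T from by omega,
        Finset.inter_eq_left.mpr (by
          rw [← hXeq]; exact U_antitone a W η D kk (by omega))]
    have hτ' : τ a W' η D kk' v = T' := by
      have hw' : ∃ m, v ∉ U a W' η D kk' m := ⟨T', by rw [hU'T']; exact hvT⟩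
      have hin : v ∈ U a W' η D kk' (T' - 1) := by
        rw [hU'T'1]; exact hvT1
      have l1 := (mem_U_iff_lt_tau hw').mp hin
      have l2 : ¬ (T' < τ a W' η D kk' v) := fun hcon =>
        (by rw [hU'T']; exact hvT : v ∉ U a W' η D kk' T')
          ((mem_U_iff_lt_tau hw').mpr hcon)
      omega
    have hsplit := degS_split a W η D kk outW v
    rw [hTdef] at hsplit
    have hsplit' := degS_split a W' η D kk' outW' v
    rw [hτ'] at hsplit'
    have hsum : ∑ w ∈ U a W' η D kk' (T' - 1), a v w =
        ∑ w ∈ U a W η D kk (T - 1), a v w := by rw [hU'T'1]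
    have hFveq : Fv a W' outW' η D kk' v = Fv a W outW η D kk v := by
      rcases Nat.eq_zero_or_pos s with hs0 | hs1
      · subst hs0
        have hmodT : (T - 1) % plen W = 0 := by
          rw [hdec, Nat.add_zero]
          simpa using mod_plen W (j := c + j) (r := 0) hppos
        have hmodT' : (T' - 1) % plen W' = 0 := by
          rw [hT'def, show j * plen W' + 0 + 1 - 1 = j * plen W' from by omega]
          simpa using mod_plen W' (j := j) (r := 0) hp'pos
        have hvD : v ∈ D kk' := by
          have hbd := boundary_fix a W η D kk (c + j - 1) (v := v) (by
            rw [show c + j - 1 + 1 = c + j from by omega,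
              show (c + j) * plen W = T - 1 from by omega]
            exact hvT1)
          rw [show c + j - 1 + 1 = c + j from by omega,
            show (c + j) * plen W = T - 1 from by omega] at hbd
          have hnot : ¬ (v ∈ D (kk - (T - 1) / plen W) ∨
              η v < ∑ w ∈ U a W η D kk (T - 1), a v w) := by
            intro hcon
            apply hvT
            rw [show T = (T - 1) + 1 from by omega]
            exact (mem_U_succ a W η D kk).mpr ⟨hvT1, hcon⟩
          have hdd : (T - 1) / plen W = c + j := by
            rw [show T - 1 = (c + j) * plen W from by omega]
            simpa using div_plen W (j := c + j) (r := 0) hppos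
          rw [hdd] at hnot
          push_neg at hnot
          rcases hbd with h | h
          · exact hmono (show kk - (c + j - 1) ≤ kk' from by omega) h
          · omega
        have hvDkk : v ∈ D kk := hmono hkk hvD
        have hcanon : ∀ (W0 : Finset V), U a W η D kk (T - 1) ⊆ W0 →
            ∀ w i, ((w, i) ∈ edgesTo a v (nbrs v \ W0) ∪
              edgesTo a v (W0 \ U a W η D kk (T - 1)) ↔
                (i < a v w ∧ w ∉ U a W η D kk (T - 1)))  := by
          intro W0 hsub w i
          simp only [mem_union, mem_edgesTo, mem_sdiff]
          constructor
          · rintro (⟨⟨h1, h2⟩, hia⟩ | ⟨⟨h1, h2⟩, hia⟩)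
            · exact ⟨hia, fun hU => h2 (hsub hU)⟩
            · exact ⟨hia, h2⟩
          · rintro ⟨hia, hU⟩
            by_cases hw0 : w ∈ W0
            · exact Or.inr ⟨⟨hw0, hU⟩, hia⟩
            · exact Or.inl ⟨⟨(hnbrs v w).mpr (by omega), hw0⟩, hia⟩
        rw [Fv, Fv, hTdef, hτ', if_pos hmodT, if_pos hmodT', hU'T'1,
          houtW v, houtW' v, if_pos hvDkk, if_pos hvD]
        ext ⟨w, i⟩
        rw [hcanon W' hUsubT1 w i,
          hcanon W (U_subset a W η D kk (T - 1)) w i]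
      · have hmodT : (T - 1) % plen W = s := by
          rw [hdec, mod_plen W hs]
        have hmodT' : (T' - 1) % plen W' = s := by
          rw [hT'def, show j * plen W' + s + 1 - 1 = j * plen W' + s from by omega,
            mod_plen W' (by omega)]
        have hU'T'2 : U a W' η D kk' (T' - 2) = U a W η D kk (T - 2) := by
          rw [hT'def, show j * plen W' + s + 1 - 2 = j * plen W' + (s - 1)
              from by omega,
            halign, div_plen W' (by omega),
            mod_plen W' (show s - 1 < plen W' from by omega),
            show (c + j) * plen W + (s - 1) = T - 2 from by omega,
            Finset.inter_eq_left.mpr (by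
              rw [← hXeq]; exact U_antitone a W η D kk (by omega))]
        rw [Fv, Fv, hTdef, hτ', if_neg (by omega), if_neg (by omega),
          hU'T'1, hU'T'2]
    refine ⟨ed, by simp only [if_pos hvW', hed], by rw [hFveq]; exact hedF, ?_⟩
    rw [hFveq]
    omega
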